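/- Let n be a positive integer. (i) If n > 9, then 𝒮_9(n) is full if and only if 9n − 2 is not a perfect square. (ii) If n > 10, then 𝒮_10(n) is full if and only if either n is odd and neither 10n − 1 nor 10n − 5 is a perfect square, or n is even and 10n − 4 is not a perfect square. (iii) If n > 11, then 𝒮_11(n) is full if and only if none of 11n − 2, 11n − 6, 11n − 8 is a perfect square. -/
import Mathlib


/-- `S m n` is the set of integers `T` such that there exist integers
`x₁,…,x_m` with `x₁+⋯+x_m = T` and `x₁²+⋯+x_m² = n`. -/
def S (m n : ℕ) : Set ℤ :=
  {T : ℤ | ∃ x : Fin m → ℤ, (∑ i, x i) = T ∧ (∑ i, (x i) ^ 2) = (n : ℤ)}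

/-- `sos m` is the set of integers expressible as a sum of `m` squares of integers. -/
def sos (m : ℕ) : Set ℤ :=
  {n : ℤ | ∃ a : Fin m → ℤ, (∑ i, (a i) ^ 2) = n}

/-- The binary quadratic form `aX² + 2hXY + bY²` is a sum of `m` squares of
integral linear forms. -/
def IsSumSqLin (m : ℕ) (a h b : ℤ) : Prop :=
  ∃ α β : Fin m → ℤ,
    (∑ i, (α i) ^ 2) = a ∧ (∑ i, α i * β i) = h ∧ (∑ i, (β i) ^ 2) = b

/-- `S m n` is full: every `T` with `T ≡ n (mod 2)` and `T² < mn` lies in `S m n`. -/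
def Sfull (m n : ℕ) : Prop :=
  ∀ T : ℤ, T % 2 = (n : ℤ) % 2 → T ^ 2 < (m : ℤ) * n → T ∈ S m n


set_option maxHeartbeats 4000000

lemma four_sq (M : ℤ) (hM : 0 ≤ M) : ∃ a b c d : ℤ, a^2+b^2+c^2+d^2 = M := by
  obtain ⟨a, b, c, d, h⟩ := Nat.sum_four_squares M.toNat
  refine ⟨a, b, c, d, ?_⟩
  have := congrArg (Nat.cast : ℕ → ℤ) h
  push_cast at this
  rwa [Int.toNat_of_nonneg hM] at this

lemma sqpar (a : ℤ) : a^2 % 2 = a % 2 := by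
  obtain ⟨k, rfl | rfl⟩ := Int.even_or_odd' a
  · have h : (2*k)^2 = 4*k^2 := by ring
    rw [h]; generalize k^2 = K; omega
  · have h : (2*k+1)^2 = 4*k^2+4*k+1 := by ring
    rw [h]; generalize k^2 = K; omega

lemma memS_of (m n : ℕ) (hm : 0 < m) (T c : ℤ) (d : Fin m → ℤ)
    (hc : (∑ i, d i) + m*c = T)
    (hQ : (m:ℤ)*(∑ i, (d i)^2) - (∑ i, d i)^2 = m*n - T^2) : T ∈ S m n := by
  refine ⟨fun i => d i + c, ?_, ?_⟩
  · rw [Finset.sum_add_distrib, Finset.sum_const, Finset.card_univ, Fintype.card_fin,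
      nsmul_eq_mul]
    exact hc
  · have hexp : ∑ i, (d i + c)^2 = (∑ i, (d i)^2) + 2*c*(∑ i, d i) + m*c^2 := by
      have h1 : ∀ i : Fin m, (d i + c)^2 = (d i)^2 + (2*c)*(d i) + c^2 := fun i => by ring
      simp only [h1, Finset.sum_add_distrib, Finset.sum_const,
        Finset.card_univ, Fintype.card_fin, nsmul_eq_mul]
      rw [← Finset.mul_sum]
    set s := ∑ i, d i
    set q := ∑ i, (d i)^2
    have hm' : (0:ℤ) < m := by exact_mod_cast hm
    have key : (m:ℤ) * (q + 2*c*s + m*c^2) = m * n := by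
      linear_combination hQ + (s + m*c + T) * hc
    rw [hexp]
    exact mul_left_cancel₀ (ne_of_gt hm') key

lemma C9 (n : ℕ) (T h k : ℤ) (hT : T = 2*h + 9*k) (hpar : T % 2 = (n:ℤ) % 2)
    (hge : 14*h^2 ≤ 9*(n:ℤ) - T^2) : T ∈ S 9 n := by
  have hY : 9*(n:ℤ) - T^2 - 14*h^2 = 9*((n:ℤ) - 2*(h^2) - 4*(h*k) - 9*(k^2)) := by
    rw [hT]; ring
  have hYpar : ∀ H HK K : ℤ, K % 2 = k % 2 → ((n:ℤ) - 2*H - 4*HK - 9*K) % 2 = 0 := by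
    intro H HK K hK; omega
  have hYp := hYpar (h^2) (h*k) (k^2) (sqpar k)
  obtain ⟨M, hM, hM0⟩ : ∃ M : ℤ, 9*(n:ℤ) - T^2 - 14*h^2 = 18*M ∧ 0 ≤ M := by
    refine ⟨((n:ℤ) - 2*(h^2) - 4*(h*k) - 9*(k^2))/2, by omega, by omega⟩
  obtain ⟨a, b, c, e, habce⟩ := four_sq M hM0
  apply memS_of 9 n (by norm_num) T k ![a+h, b, c, e, h-a, -b, -c, -e, 0]
  · norm_num [Fin.sum_univ_succ]
    omega
  · norm_num [Fin.sum_univ_succ]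
    push_cast
    linear_combination 18*habce - hM

lemma C10 (n : ℕ) (T g k : ℤ) (hT : T = g + 10*k) (hpar : T % 2 = (n:ℤ) % 2)
    (hge : 9*g^2 ≤ 10*(n:ℤ) - T^2) : T ∈ S 10 n := by
  have hYpar : ∀ G GK K : ℤ, G % 2 = g % 2 → ((n:ℤ) - G - 2*GK - 10*K) % 2 = 0 := by
    intro G GK K hK; omega
  have hYp := hYpar (g^2) (g*k) (k^2) (sqpar g)
  have hY : 10*(n:ℤ) - T^2 - 9*g^2 = 10*((n:ℤ) - g^2 - 2*(g*k) - 10*(k^2)) := by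
    rw [hT]; ring
  obtain ⟨M, hM, hM0⟩ : ∃ M : ℤ, 10*(n:ℤ) - T^2 - 9*g^2 = 20*M ∧ 0 ≤ M := by
    refine ⟨((n:ℤ) - g^2 - 2*(g*k) - 10*(k^2))/2, by omega, by omega⟩
  obtain ⟨a, b, c, e, habce⟩ := four_sq M hM0
  apply memS_of 10 n (by norm_num) T k ![a, b, c, e, -a, -b, -c, -e, g, 0]
  · norm_num [Fin.sum_univ_succ]
    omega
  · norm_num [Fin.sum_univ_succ]
    linear_combination 20*habce - hM

lemma C11 (n : ℕ) (T a b k : ℤ) (hT : T = a + b + 11*k) (hpar : T % 2 = (n:ℤ) % 2)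
    (hge : 10*a^2 + 10*b^2 - 2*(a*b) ≤ 11*(n:ℤ) - T^2) : T ∈ S 11 n := by
  have hYpar : ∀ A B AB K : ℤ, A % 2 = a % 2 → B % 2 = b % 2 → K % 2 = k % 2 →
      ((n:ℤ) - A - B - 2*AB - 11*K) % 2 = 0 := by
    intro A B AB K h1 h2 h3; omega
  have hYp := hYpar (a^2) (b^2) ((a+b)*k) (k^2) (sqpar a) (sqpar b) (sqpar k)
  have hY : 11*(n:ℤ) - T^2 - (10*a^2 + 10*b^2 - 2*(a*b))
      = 11*((n:ℤ) - a^2 - b^2 - 2*((a+b)*k) - 11*(k^2)) := by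
    rw [hT]; ring
  obtain ⟨M, hM, hM0⟩ : ∃ M : ℤ, 11*(n:ℤ) - T^2 - (10*a^2 + 10*b^2 - 2*(a*b)) = 22*M ∧ 0 ≤ M := by
    refine ⟨((n:ℤ) - a^2 - b^2 - 2*((a+b)*k) - 11*(k^2))/2, by omega, by omega⟩
  obtain ⟨p, q, r, s, hpqrs⟩ := four_sq M hM0
  apply memS_of 11 n (by norm_num) T k ![p, q, r, s, -p, -q, -r, -s, a, b, 0]
  · norm_num [Fin.sum_univ_succ]
    omega
  · norm_num [Fin.sum_univ_succ]
    linear_combination 22*hpqrs - hM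

lemma W9 (n : ℕ) (T c v1 v2 v3 v4 v5 v6 v7 v8 v9 : ℤ)
    (hc : v1+v2+v3+v4+v5+v6+v7+v8+v9 + 9*c = T)
    (hQ : 9*(v1^2+v2^2+v3^2+v4^2+v5^2+v6^2+v7^2+v8^2+v9^2) - (v1+v2+v3+v4+v5+v6+v7+v8+v9)^2 = 9*(n:ℤ) - T^2) : T ∈ S 9 n := by
  have e1 : (∑ i, (![v1,v2,v3,v4,v5,v6,v7,v8,v9] : Fin 9 → ℤ) i) = v1+v2+v3+v4+v5+v6+v7+v8+v9 := by
    simp [Fin.sum_univ_succ]; ring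
  have e2 : (∑ i, ((![v1,v2,v3,v4,v5,v6,v7,v8,v9] : Fin 9 → ℤ) i)^2) = v1^2+v2^2+v3^2+v4^2+v5^2+v6^2+v7^2+v8^2+v9^2 := by
    simp [Fin.sum_univ_succ]; ring
  exact memS_of 9 n (by norm_num) T c ![v1,v2,v3,v4,v5,v6,v7,v8,v9] (by rw [e1]; exact hc) (by rw [e1, e2]; exact hQ)

lemma W10 (n : ℕ) (T c v1 v2 v3 v4 v5 v6 v7 v8 v9 v10 : ℤ)
    (hc : v1+v2+v3+v4+v5+v6+v7+v8+v9+v10 + 10*c = T)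
    (hQ : 10*(v1^2+v2^2+v3^2+v4^2+v5^2+v6^2+v7^2+v8^2+v9^2+v10^2) - (v1+v2+v3+v4+v5+v6+v7+v8+v9+v10)^2 = 10*(n:ℤ) - T^2) : T ∈ S 10 n := by
  have e1 : (∑ i, (![v1,v2,v3,v4,v5,v6,v7,v8,v9,v10] : Fin 10 → ℤ) i) = v1+v2+v3+v4+v5+v6+v7+v8+v9+v10 := by
    simp [Fin.sum_univ_succ]; ring
  have e2 : (∑ i, ((![v1,v2,v3,v4,v5,v6,v7,v8,v9,v10] : Fin 10 → ℤ) i)^2) = v1^2+v2^2+v3^2+v4^2+v5^2+v6^2+v7^2+v8^2+v9^2+v10^2 := by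
    simp [Fin.sum_univ_succ]; ring
  exact memS_of 10 n (by norm_num) T c ![v1,v2,v3,v4,v5,v6,v7,v8,v9,v10] (by rw [e1]; exact hc) (by rw [e1, e2]; exact hQ)

lemma W11 (n : ℕ) (T c v1 v2 v3 v4 v5 v6 v7 v8 v9 v10 v11 : ℤ)
    (hc : v1+v2+v3+v4+v5+v6+v7+v8+v9+v10+v11 + 11*c = T)
    (hQ : 11*(v1^2+v2^2+v3^2+v4^2+v5^2+v6^2+v7^2+v8^2+v9^2+v10^2+v11^2) - (v1+v2+v3+v4+v5+v6+v7+v8+v9+v10+v11)^2 = 11*(n:ℤ) - T^2) : T ∈ S 11 n := by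
  have e1 : (∑ i, (![v1,v2,v3,v4,v5,v6,v7,v8,v9,v10,v11] : Fin 11 → ℤ) i) = v1+v2+v3+v4+v5+v6+v7+v8+v9+v10+v11 := by
    simp [Fin.sum_univ_succ]; ring
  have e2 : (∑ i, ((![v1,v2,v3,v4,v5,v6,v7,v8,v9,v10,v11] : Fin 11 → ℤ) i)^2) = v1^2+v2^2+v3^2+v4^2+v5^2+v6^2+v7^2+v8^2+v9^2+v10^2+v11^2 := by
    simp [Fin.sum_univ_succ]; ring
  exact memS_of 11 n (by norm_num) T c ![v1,v2,v3,v4,v5,v6,v7,v8,v9,v10,v11] (by rw [e1]; exact hc) (by rw [e1, e2]; exact hQ)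

lemma back9 (n : ℕ) (T : ℤ) (hpar : T % 2 = (n:ℤ) % 2) (hlt : T^2 < 9*(n:ℤ))
    (hN2 : 9*(n:ℤ) - T^2 ≠ 2) : T ∈ S 9 n := by
  obtain ⟨u, hu⟩ : ∃ u, u = T^2 := ⟨_, rfl⟩
  rw [← hu] at hlt hN2
  have hTpar : u % 2 = T % 2 := by rw [hu]; exact sqpar T
  obtain ⟨k, r, hT, hr0, hr9⟩ : ∃ k r : ℤ, T = 9*k + r ∧ 0 ≤ r ∧ r < 9 :=
    ⟨T/9, T%9, by omega, by omega, by omega⟩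
  obtain ⟨A, hA⟩ : ∃ A, u = 9*A + r*r := ⟨9*k^2+2*k*r, by rw [hu, hT]; ring⟩
  interval_cases r
  · -- r = 0
    by_cases hbig : (0:ℤ) ≤ 9*(n:ℤ) - u
    · refine C9 n T (0) (k - (0)) (by omega) hpar ?_
      rw [← hu]; norm_num; linarith
    · exfalso; omega
  · -- r = 1
    by_cases hbig : (224:ℤ) ≤ 9*(n:ℤ) - u
    · refine C9 n T (-4) (k - (-1)) (by omega) hpar ?_
      rw [← hu]; norm_num; linarith
    · have hdis : 9*(n:ℤ) - u = 8 ∨ 9*(n:ℤ) - u = 26 ∨ 9*(n:ℤ) - u = 44 ∨ 9*(n:ℤ) - u = 62 ∨ 9*(n:ℤ) - u = 80 ∨ 9*(n:ℤ) - u = 98 ∨ 9*(n:ℤ) - u = 116 ∨ 9*(n:ℤ) - u = 134 ∨ 9*(n:ℤ) - u = 152 ∨ 9*(n:ℤ) - u = 170 ∨ 9*(n:ℤ) - u = 188 ∨ 9*(n:ℤ) - u = 206 := by omega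
      rcases hdis with hv|hv|hv|hv|hv|hv|hv|hv|hv|hv|hv|hv
      · refine W9 n T (k - (0)) (0) (0) (0) (0) (0) (0) (0) (0) (1) (by omega) ?_
        rw [← hu]; norm_num; omega
      · refine W9 n T (k - (1)) (0) (1) (1) (1) (1) (1) (1) (2) (2) (by omega) ?_
        rw [← hu]; norm_num; omega
      · refine W9 n T (k - (1)) (0) (0) (1) (1) (1) (1) (2) (2) (2) (by omega) ?_
        rw [← hu]; norm_num; omega
      · refine W9 n T (k - (1)) (0) (0) (0) (1) (1) (2) (2) (2) (2) (by omega) ?_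
        rw [← hu]; norm_num; omega
      · refine W9 n T (k - (1)) (0) (0) (0) (0) (2) (2) (2) (2) (2) (by omega) ?_
        rw [← hu]; norm_num; omega
      · refine W9 n T (k - (1)) (0) (0) (0) (0) (1) (2) (2) (2) (3) (by omega) ?_
        rw [← hu]; norm_num; omega
      · refine W9 n T (k - (1)) (0) (0) (0) (0) (1) (1) (2) (3) (3) (by omega) ?_
        rw [← hu]; norm_num; omega
      · refine W9 n T (k - (1)) (0) (0) (0) (0) (0) (2) (2) (3) (3) (by omega) ?_
        rw [← hu]; norm_num; omega
      · refine W9 n T (k - (1)) (0) (0) (0) (0) (0) (1) (3) (3) (3) (by omega) ?_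
        rw [← hu]; norm_num; omega
      · refine W9 n T (k - (1)) (0) (0) (0) (0) (0) (1) (2) (3) (4) (by omega) ?_
        rw [← hu]; norm_num; omega
      · refine W9 n T (k - (1)) (0) (0) (0) (0) (1) (1) (1) (2) (5) (by omega) ?_
        rw [← hu]; norm_num; omega
      · refine W9 n T (k - (1)) (0) (0) (0) (0) (0) (0) (3) (3) (4) (by omega) ?_
        rw [← hu]; norm_num; omega
  · -- r = 2
    by_cases hbig : (14:ℤ) ≤ 9*(n:ℤ) - u
    · refine C9 n T (1) (k - (0)) (by omega) hpar ?_
      rw [← hu]; norm_num; linarith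
    · exfalso; omega
  · -- r = 3
    by_cases hbig : (126:ℤ) ≤ 9*(n:ℤ) - u
    · refine C9 n T (-3) (k - (-1)) (by omega) hpar ?_
      rw [← hu]; norm_num; linarith
    · have hdis : 9*(n:ℤ) - u = 18 ∨ 9*(n:ℤ) - u = 36 ∨ 9*(n:ℤ) - u = 54 ∨ 9*(n:ℤ) - u = 72 ∨ 9*(n:ℤ) - u = 90 ∨ 9*(n:ℤ) - u = 108 := by omega
      rcases hdis with hv|hv|hv|hv|hv|hv
      · refine W9 n T (k - (0)) (0) (0) (0) (0) (0) (0) (1) (1) (1) (by omega) ?_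
        rw [← hu]; norm_num; omega
      · refine W9 n T (k - (0)) (0) (0) (0) (0) (0) (0) (0) (1) (2) (by omega) ?_
        rw [← hu]; norm_num; omega
      · refine W9 n T (k - (1)) (0) (0) (1) (1) (2) (2) (2) (2) (2) (by omega) ?_
        rw [← hu]; norm_num; omega
      · refine W9 n T (k - (0)) (0) (0) (0) (0) (0) (0) (0) (0) (3) (by omega) ?_
        rw [← hu]; norm_num; omega
      · refine W9 n T (k - (1)) (0) (0) (0) (1) (2) (2) (2) (2) (3) (by omega) ?_
        rw [← hu]; norm_num; omega
      · refine W9 n T (k - (1)) (0) (0) (0) (1) (1) (2) (2) (3) (3) (by omega) ?_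
        rw [← hu]; norm_num; omega
  · -- r = 4
    by_cases hbig : (56:ℤ) ≤ 9*(n:ℤ) - u
    · refine C9 n T (2) (k - (0)) (by omega) hpar ?_
      rw [← hu]; norm_num; linarith
    · have hdis : 9*(n:ℤ) - u = 20 ∨ 9*(n:ℤ) - u = 38 := by omega
      rcases hdis with hv|hv
      · refine W9 n T (k - (0)) (0) (0) (0) (0) (0) (1) (1) (1) (1) (by omega) ?_
        rw [← hu]; norm_num; omega
      · refine W9 n T (k - (0)) (0) (0) (0) (0) (0) (0) (1) (1) (2) (by omega) ?_
        rw [← hu]; norm_num; omega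
  · -- r = 5
    by_cases hbig : (56:ℤ) ≤ 9*(n:ℤ) - u
    · refine C9 n T (-2) (k - (-1)) (by omega) hpar ?_
      rw [← hu]; norm_num; linarith
    · have hdis : 9*(n:ℤ) - u = 20 ∨ 9*(n:ℤ) - u = 38 := by omega
      rcases hdis with hv|hv
      · refine W9 n T (k - (0)) (0) (0) (0) (0) (1) (1) (1) (1) (1) (by omega) ?_
        rw [← hu]; norm_num; omega
      · refine W9 n T (k - (0)) (0) (0) (0) (0) (0) (1) (1) (1) (2) (by omega) ?_
        rw [← hu]; norm_num; omega
  · -- r = 6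
    by_cases hbig : (126:ℤ) ≤ 9*(n:ℤ) - u
    · refine C9 n T (3) (k - (0)) (by omega) hpar ?_
      rw [← hu]; norm_num; linarith
    · have hdis : 9*(n:ℤ) - u = 18 ∨ 9*(n:ℤ) - u = 36 ∨ 9*(n:ℤ) - u = 54 ∨ 9*(n:ℤ) - u = 72 ∨ 9*(n:ℤ) - u = 90 ∨ 9*(n:ℤ) - u = 108 := by omega
      rcases hdis with hv|hv|hv|hv|hv|hv
      · refine W9 n T (k - (0)) (0) (0) (0) (1) (1) (1) (1) (1) (1) (by omega) ?_
        rw [← hu]; norm_num; omega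
      · refine W9 n T (k - (0)) (0) (0) (0) (0) (1) (1) (1) (1) (2) (by omega) ?_
        rw [← hu]; norm_num; omega
      · refine W9 n T (k - (0)) (0) (0) (0) (0) (0) (1) (1) (2) (2) (by omega) ?_
        rw [← hu]; norm_num; omega
      · refine W9 n T (k - (0)) (0) (0) (0) (0) (0) (0) (2) (2) (2) (by omega) ?_
        rw [← hu]; norm_num; omega
      · refine W9 n T (k - (0)) (0) (0) (0) (0) (0) (0) (1) (2) (3) (by omega) ?_
        rw [← hu]; norm_num; omega
      · refine W9 n T (k - (1)) (0) (0) (1) (1) (2) (2) (3) (3) (3) (by omega) ?_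
        rw [← hu]; norm_num; omega
  · -- r = 7
    by_cases hbig : (14:ℤ) ≤ 9*(n:ℤ) - u
    · refine C9 n T (-1) (k - (-1)) (by omega) hpar ?_
      rw [← hu]; norm_num; linarith
    · exfalso; omega
  · -- r = 8
    by_cases hbig : (224:ℤ) ≤ 9*(n:ℤ) - u
    · refine C9 n T (4) (k - (0)) (by omega) hpar ?_
      rw [← hu]; norm_num; linarith
    · have hdis : 9*(n:ℤ) - u = 8 ∨ 9*(n:ℤ) - u = 26 ∨ 9*(n:ℤ) - u = 44 ∨ 9*(n:ℤ) - u = 62 ∨ 9*(n:ℤ) - u = 80 ∨ 9*(n:ℤ) - u = 98 ∨ 9*(n:ℤ) - u = 116 ∨ 9*(n:ℤ) - u = 134 ∨ 9*(n:ℤ) - u = 152 ∨ 9*(n:ℤ) - u = 170 ∨ 9*(n:ℤ) - u = 188 ∨ 9*(n:ℤ) - u = 206 := by omega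
      rcases hdis with hv|hv|hv|hv|hv|hv|hv|hv|hv|hv|hv|hv
      · refine W9 n T (k - (0)) (0) (1) (1) (1) (1) (1) (1) (1) (1) (by omega) ?_
        rw [← hu]; norm_num; omega
      · refine W9 n T (k - (0)) (0) (0) (1) (1) (1) (1) (1) (1) (2) (by omega) ?_
        rw [← hu]; norm_num; omega
      · refine W9 n T (k - (0)) (0) (0) (0) (1) (1) (1) (1) (2) (2) (by omega) ?_
        rw [← hu]; norm_num; omega
      · refine W9 n T (k - (0)) (0) (0) (0) (0) (1) (1) (2) (2) (2) (by omega) ?_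
        rw [← hu]; norm_num; omega
      · refine W9 n T (k - (0)) (0) (0) (0) (0) (0) (2) (2) (2) (2) (by omega) ?_
        rw [← hu]; norm_num; omega
      · refine W9 n T (k - (0)) (0) (0) (0) (0) (0) (1) (2) (2) (3) (by omega) ?_
        rw [← hu]; norm_num; omega
      · refine W9 n T (k - (0)) (0) (0) (0) (0) (0) (1) (1) (3) (3) (by omega) ?_
        rw [← hu]; norm_num; omega
      · refine W9 n T (k - (0)) (0) (0) (0) (0) (0) (0) (2) (3) (3) (by omega) ?_
        rw [← hu]; norm_num; omega
      · refine W9 n T (k - (0)) (0) (0) (0) (0) (0) (0) (2) (2) (4) (by omega) ?_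
        rw [← hu]; norm_num; omega
      · refine W9 n T (k - (0)) (0) (0) (0) (0) (0) (0) (1) (3) (4) (by omega) ?_
        rw [← hu]; norm_num; omega
      · refine W9 n T (k - (0)) (0) (0) (0) (0) (0) (1) (1) (1) (5) (by omega) ?_
        rw [← hu]; norm_num; omega
      · refine W9 n T (k - (0)) (0) (0) (0) (0) (0) (0) (1) (2) (5) (by omega) ?_
        rw [← hu]; norm_num; omega

lemma back10 (n : ℕ) (T : ℤ) (hpar : T % 2 = (n:ℤ) % 2) (hlt : T^2 < 10*(n:ℤ))
    (hN2 : 10*(n:ℤ) - T^2 ≠ 1) (hN4 : 10*(n:ℤ) - T^2 ≠ 4) (hN5 : 10*(n:ℤ) - T^2 ≠ 5) : T ∈ S 10 n := by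
  obtain ⟨u, hu⟩ : ∃ u, u = T^2 := ⟨_, rfl⟩
  rw [← hu] at hlt hN2 hN4 hN5
  have hTpar : u % 2 = T % 2 := by rw [hu]; exact sqpar T
  obtain ⟨k, r, hT, hr0, hr9⟩ : ∃ k r : ℤ, T = 10*k + r ∧ 0 ≤ r ∧ r < 10 :=
    ⟨T/10, T%10, by omega, by omega, by omega⟩
  obtain ⟨A, hA⟩ : ∃ A, u = 20*A + r*r := ⟨5*k^2+k*r, by rw [hu, hT]; ring⟩
  interval_cases r
  · -- r = 0
    by_cases hbig : (0:ℤ) ≤ 10*(n:ℤ) - u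
    · refine C10 n T (0) (k - (0)) (by omega) hpar ?_
      rw [← hu]; norm_num; linarith
    · exfalso; omega
  · -- r = 1
    by_cases hbig : (9:ℤ) ≤ 10*(n:ℤ) - u
    · refine C10 n T (1) (k - (0)) (by omega) hpar ?_
      rw [← hu]; norm_num; linarith
    · exfalso; omega
  · -- r = 2
    by_cases hbig : (36:ℤ) ≤ 10*(n:ℤ) - u
    · refine C10 n T (2) (k - (0)) (by omega) hpar ?_
      rw [← hu]; norm_num; linarith
    · have hdis : 10*(n:ℤ) - u = 16 := by omega
      rcases hdis with hv
      · refine W10 n T (k - (0)) (0) (0) (0) (0) (0) (0) (0) (0) (1) (1) (by omega) ?_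
        rw [← hu]; norm_num; omega
  · -- r = 3
    by_cases hbig : (81:ℤ) ≤ 10*(n:ℤ) - u
    · refine C10 n T (3) (k - (0)) (by omega) hpar ?_
      rw [← hu]; norm_num; linarith
    · have hdis : 10*(n:ℤ) - u = 21 ∨ 10*(n:ℤ) - u = 41 ∨ 10*(n:ℤ) - u = 61 := by omega
      rcases hdis with hv|hv|hv
      · refine W10 n T (k - (0)) (0) (0) (0) (0) (0) (0) (0) (1) (1) (1) (by omega) ?_
        rw [← hu]; norm_num; omega
      · refine W10 n T (k - (0)) (0) (0) (0) (0) (0) (0) (0) (0) (1) (2) (by omega) ?_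
        rw [← hu]; norm_num; omega
      · refine W10 n T (k - (1)) (0) (0) (1) (1) (1) (2) (2) (2) (2) (2) (by omega) ?_
        rw [← hu]; norm_num; omega
  · -- r = 4
    by_cases hbig : (144:ℤ) ≤ 10*(n:ℤ) - u
    · refine C10 n T (4) (k - (0)) (by omega) hpar ?_
      rw [← hu]; norm_num; linarith
    · have hdis : 10*(n:ℤ) - u = 24 ∨ 10*(n:ℤ) - u = 44 ∨ 10*(n:ℤ) - u = 64 ∨ 10*(n:ℤ) - u = 84 ∨ 10*(n:ℤ) - u = 104 ∨ 10*(n:ℤ) - u = 124 := by omega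
      rcases hdis with hv|hv|hv|hv|hv|hv
      · refine W10 n T (k - (0)) (0) (0) (0) (0) (0) (0) (1) (1) (1) (1) (by omega) ?_
        rw [← hu]; norm_num; omega
      · refine W10 n T (k - (0)) (0) (0) (0) (0) (0) (0) (0) (1) (1) (2) (by omega) ?_
        rw [← hu]; norm_num; omega
      · refine W10 n T (k - (0)) (0) (0) (0) (0) (0) (0) (0) (0) (2) (2) (by omega) ?_
        rw [← hu]; norm_num; omega
      · refine W10 n T (k - (0)) (0) (0) (0) (0) (0) (0) (0) (0) (1) (3) (by omega) ?_
        rw [← hu]; norm_num; omega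
      · refine W10 n T (k - (1)) (0) (0) (0) (1) (2) (2) (2) (2) (2) (3) (by omega) ?_
        rw [← hu]; norm_num; omega
      · refine W10 n T (k - (1)) (0) (0) (0) (1) (1) (2) (2) (2) (3) (3) (by omega) ?_
        rw [← hu]; norm_num; omega
  · -- r = 5
    by_cases hbig : (225:ℤ) ≤ 10*(n:ℤ) - u
    · refine C10 n T (5) (k - (0)) (by omega) hpar ?_
      rw [← hu]; norm_num; linarith
    · have hdis : 10*(n:ℤ) - u = 25 ∨ 10*(n:ℤ) - u = 45 ∨ 10*(n:ℤ) - u = 65 ∨ 10*(n:ℤ) - u = 85 ∨ 10*(n:ℤ) - u = 105 ∨ 10*(n:ℤ) - u = 125 ∨ 10*(n:ℤ) - u = 145 ∨ 10*(n:ℤ) - u = 165 ∨ 10*(n:ℤ) - u = 185 ∨ 10*(n:ℤ) - u = 205 := by omega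
      rcases hdis with hv|hv|hv|hv|hv|hv|hv|hv|hv|hv
      · refine W10 n T (k - (0)) (0) (0) (0) (0) (0) (1) (1) (1) (1) (1) (by omega) ?_
        rw [← hu]; norm_num; omega
      · refine W10 n T (k - (0)) (0) (0) (0) (0) (0) (0) (1) (1) (1) (2) (by omega) ?_
        rw [← hu]; norm_num; omega
      · refine W10 n T (k - (0)) (0) (0) (0) (0) (0) (0) (0) (1) (2) (2) (by omega) ?_
        rw [← hu]; norm_num; omega
      · refine W10 n T (k - (0)) (0) (0) (0) (0) (0) (0) (0) (1) (1) (3) (by omega) ?_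
        rw [← hu]; norm_num; omega
      · refine W10 n T (k - (0)) (0) (0) (0) (0) (0) (0) (0) (0) (2) (3) (by omega) ?_
        rw [← hu]; norm_num; omega
      · refine W10 n T (k - (1)) (0) (0) (0) (1) (2) (2) (2) (2) (3) (3) (by omega) ?_
        rw [← hu]; norm_num; omega
      · refine W10 n T (k - (0)) (0) (0) (0) (0) (0) (0) (0) (0) (1) (4) (by omega) ?_
        rw [← hu]; norm_num; omega
      · refine W10 n T (k - (1)) (0) (0) (0) (0) (2) (2) (2) (3) (3) (3) (by omega) ?_
        rw [← hu]; norm_num; omega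
      · refine W10 n T (k - (1)) (0) (0) (0) (0) (1) (2) (3) (3) (3) (3) (by omega) ?_
        rw [← hu]; norm_num; omega
      · refine W10 n T (k - (1)) (0) (0) (0) (0) (1) (2) (2) (3) (3) (4) (by omega) ?_
        rw [← hu]; norm_num; omega
  · -- r = 6
    by_cases hbig : (144:ℤ) ≤ 10*(n:ℤ) - u
    · refine C10 n T (-4) (k - (-1)) (by omega) hpar ?_
      rw [← hu]; norm_num; linarith
    · have hdis : 10*(n:ℤ) - u = 24 ∨ 10*(n:ℤ) - u = 44 ∨ 10*(n:ℤ) - u = 64 ∨ 10*(n:ℤ) - u = 84 ∨ 10*(n:ℤ) - u = 104 ∨ 10*(n:ℤ) - u = 124 := by omega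
      rcases hdis with hv|hv|hv|hv|hv|hv
      · refine W10 n T (k - (0)) (0) (0) (0) (0) (1) (1) (1) (1) (1) (1) (by omega) ?_
        rw [← hu]; norm_num; omega
      · refine W10 n T (k - (0)) (0) (0) (0) (0) (0) (1) (1) (1) (1) (2) (by omega) ?_
        rw [← hu]; norm_num; omega
      · refine W10 n T (k - (0)) (0) (0) (0) (0) (0) (0) (1) (1) (2) (2) (by omega) ?_
        rw [← hu]; norm_num; omega
      · refine W10 n T (k - (0)) (0) (0) (0) (0) (0) (0) (0) (2) (2) (2) (by omega) ?_
        rw [← hu]; norm_num; omega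
      · refine W10 n T (k - (0)) (0) (0) (0) (0) (0) (0) (0) (1) (2) (3) (by omega) ?_
        rw [← hu]; norm_num; omega
      · refine W10 n T (k - (1)) (0) (0) (0) (2) (2) (2) (2) (2) (3) (3) (by omega) ?_
        rw [← hu]; norm_num; omega
  · -- r = 7
    by_cases hbig : (81:ℤ) ≤ 10*(n:ℤ) - u
    · refine C10 n T (-3) (k - (-1)) (by omega) hpar ?_
      rw [← hu]; norm_num; linarith
    · have hdis : 10*(n:ℤ) - u = 21 ∨ 10*(n:ℤ) - u = 41 ∨ 10*(n:ℤ) - u = 61 := by omega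
      rcases hdis with hv|hv|hv
      · refine W10 n T (k - (0)) (0) (0) (0) (1) (1) (1) (1) (1) (1) (1) (by omega) ?_
        rw [← hu]; norm_num; omega
      · refine W10 n T (k - (0)) (0) (0) (0) (0) (1) (1) (1) (1) (1) (2) (by omega) ?_
        rw [← hu]; norm_num; omega
      · refine W10 n T (k - (0)) (0) (0) (0) (0) (0) (1) (1) (1) (2) (2) (by omega) ?_
        rw [← hu]; norm_num; omega
  · -- r = 8
    by_cases hbig : (36:ℤ) ≤ 10*(n:ℤ) - u
    · refine C10 n T (-2) (k - (-1)) (by omega) hpar ?_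
      rw [← hu]; norm_num; linarith
    · have hdis : 10*(n:ℤ) - u = 16 := by omega
      rcases hdis with hv
      · refine W10 n T (k - (0)) (0) (0) (1) (1) (1) (1) (1) (1) (1) (1) (by omega) ?_
        rw [← hu]; norm_num; omega
  · -- r = 9
    by_cases hbig : (9:ℤ) ≤ 10*(n:ℤ) - u
    · refine C10 n T (-1) (k - (-1)) (by omega) hpar ?_
      rw [← hu]; norm_num; linarith
    · exfalso; omega

lemma back11 (n : ℕ) (T : ℤ) (hpar : T % 2 = (n:ℤ) % 2) (hlt : T^2 < 11*(n:ℤ))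
    (hN2 : 11*(n:ℤ) - T^2 ≠ 2) (hN6 : 11*(n:ℤ) - T^2 ≠ 6) (hN8 : 11*(n:ℤ) - T^2 ≠ 8) : T ∈ S 11 n := by
  obtain ⟨u, hu⟩ : ∃ u, u = T^2 := ⟨_, rfl⟩
  rw [← hu] at hlt hN2 hN6 hN8
  have hTpar : u % 2 = T % 2 := by rw [hu]; exact sqpar T
  obtain ⟨k, r, hT, hr0, hr9⟩ : ∃ k r : ℤ, T = 11*k + r ∧ 0 ≤ r ∧ r < 11 :=
    ⟨T/11, T%11, by omega, by omega, by omega⟩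
  obtain ⟨A, hA⟩ : ∃ A, u = 11*A + r*r := ⟨11*k^2+2*k*r, by rw [hu, hT]; ring⟩
  interval_cases r
  · -- r = 0
    by_cases hbig : (0:ℤ) ≤ 11*(n:ℤ) - u
    · refine C11 n T (0) (0) (k - (0)) (by omega) hpar ?_
      rw [← hu]; norm_num; linarith
    · exfalso; omega
  · -- r = 1
    by_cases hbig : (10:ℤ) ≤ 11*(n:ℤ) - u
    · refine C11 n T (1) (0) (k - (0)) (by omega) hpar ?_
      rw [← hu]; norm_num; linarith
    · exfalso; omega
  · -- r = 2
    by_cases hbig : (18:ℤ) ≤ 11*(n:ℤ) - u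
    · refine C11 n T (1) (1) (k - (0)) (by omega) hpar ?_
      rw [← hu]; norm_num; linarith
    · exfalso; omega
  · -- r = 3
    by_cases hbig : (46:ℤ) ≤ 11*(n:ℤ) - u
    · refine C11 n T (2) (1) (k - (0)) (by omega) hpar ?_
      rw [← hu]; norm_num; linarith
    · have hdis : 11*(n:ℤ) - u = 24 := by omega
      rcases hdis with hv
      · refine W11 n T (k - (0)) (0) (0) (0) (0) (0) (0) (0) (0) (1) (1) (1) (by omega) ?_
        rw [← hu]; norm_num; omega
  · -- r = 4
    by_cases hbig : (72:ℤ) ≤ 11*(n:ℤ) - u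
    · refine C11 n T (2) (2) (k - (0)) (by omega) hpar ?_
      rw [← hu]; norm_num; linarith
    · have hdis : 11*(n:ℤ) - u = 28 ∨ 11*(n:ℤ) - u = 50 := by omega
      rcases hdis with hv|hv
      · refine W11 n T (k - (0)) (0) (0) (0) (0) (0) (0) (0) (1) (1) (1) (1) (by omega) ?_
        rw [← hu]; norm_num; omega
      · refine W11 n T (k - (0)) (0) (0) (0) (0) (0) (0) (0) (0) (1) (1) (2) (by omega) ?_
        rw [← hu]; norm_num; omega
  · -- r = 5
    by_cases hbig : (118:ℤ) ≤ 11*(n:ℤ) - u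
    · refine C11 n T (3) (2) (k - (0)) (by omega) hpar ?_
      rw [← hu]; norm_num; linarith
    · have hdis : 11*(n:ℤ) - u = 30 ∨ 11*(n:ℤ) - u = 52 ∨ 11*(n:ℤ) - u = 74 ∨ 11*(n:ℤ) - u = 96 := by omega
      rcases hdis with hv|hv|hv|hv
      · refine W11 n T (k - (0)) (0) (0) (0) (0) (0) (0) (1) (1) (1) (1) (1) (by omega) ?_
        rw [← hu]; norm_num; omega
      · refine W11 n T (k - (0)) (0) (0) (0) (0) (0) (0) (0) (1) (1) (1) (2) (by omega) ?_
        rw [← hu]; norm_num; omega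
      · refine W11 n T (k - (0)) (0) (0) (0) (0) (0) (0) (0) (0) (1) (2) (2) (by omega) ?_
        rw [← hu]; norm_num; omega
      · refine W11 n T (k - (0)) (0) (0) (0) (0) (0) (0) (0) (0) (1) (1) (3) (by omega) ?_
        rw [← hu]; norm_num; omega
  · -- r = 6
    by_cases hbig : (118:ℤ) ≤ 11*(n:ℤ) - u
    · refine C11 n T (-2) (-3) (k - (-1)) (by omega) hpar ?_
      rw [← hu]; norm_num; linarith
    · have hdis : 11*(n:ℤ) - u = 30 ∨ 11*(n:ℤ) - u = 52 ∨ 11*(n:ℤ) - u = 74 ∨ 11*(n:ℤ) - u = 96 := by omega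
      rcases hdis with hv|hv|hv|hv
      · refine W11 n T (k - (0)) (0) (0) (0) (0) (0) (1) (1) (1) (1) (1) (1) (by omega) ?_
        rw [← hu]; norm_num; omega
      · refine W11 n T (k - (0)) (0) (0) (0) (0) (0) (0) (1) (1) (1) (1) (2) (by omega) ?_
        rw [← hu]; norm_num; omega
      · refine W11 n T (k - (0)) (0) (0) (0) (0) (0) (0) (0) (1) (1) (2) (2) (by omega) ?_
        rw [← hu]; norm_num; omega
      · refine W11 n T (k - (0)) (0) (0) (0) (0) (0) (0) (0) (0) (2) (2) (2) (by omega) ?_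
        rw [← hu]; norm_num; omega
  · -- r = 7
    by_cases hbig : (72:ℤ) ≤ 11*(n:ℤ) - u
    · refine C11 n T (-2) (-2) (k - (-1)) (by omega) hpar ?_
      rw [← hu]; norm_num; linarith
    · have hdis : 11*(n:ℤ) - u = 28 ∨ 11*(n:ℤ) - u = 50 := by omega
      rcases hdis with hv|hv
      · refine W11 n T (k - (0)) (0) (0) (0) (0) (1) (1) (1) (1) (1) (1) (1) (by omega) ?_
        rw [← hu]; norm_num; omega
      · refine W11 n T (k - (0)) (0) (0) (0) (0) (0) (1) (1) (1) (1) (1) (2) (by omega) ?_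
        rw [← hu]; norm_num; omega
  · -- r = 8
    by_cases hbig : (46:ℤ) ≤ 11*(n:ℤ) - u
    · refine C11 n T (-1) (-2) (k - (-1)) (by omega) hpar ?_
      rw [← hu]; norm_num; linarith
    · have hdis : 11*(n:ℤ) - u = 24 := by omega
      rcases hdis with hv
      · refine W11 n T (k - (0)) (0) (0) (0) (1) (1) (1) (1) (1) (1) (1) (1) (by omega) ?_
        rw [← hu]; norm_num; omega
  · -- r = 9
    by_cases hbig : (18:ℤ) ≤ 11*(n:ℤ) - u
    · refine C11 n T (-1) (-1) (k - (-1)) (by omega) hpar ?_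
      rw [← hu]; norm_num; linarith
    · exfalso; omega
  · -- r = 10
    by_cases hbig : (10:ℤ) ≤ 11*(n:ℤ) - u
    · refine C11 n T (0) (-1) (k - (-1)) (by omega) hpar ?_
      rw [← hu]; norm_num; linarith
    · exfalso; omega

lemma max_sub_max (a : ℤ) : max a 0 - max (-a) 0 = a := by
  rcases le_total a 0 with h | h
  · rw [max_eq_right h, max_eq_left (by linarith : (0:ℤ) ≤ -a)]; ring
  · rw [max_eq_left h, max_eq_right (by linarith : -a ≤ (0:ℤ))]; ring

lemma lower (m n : ℕ) (hm : 0 < m) (T : ℤ) (hT : T ∈ S m n)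
    (hne : (m:ℤ)*n - T^2 ≠ 0) : (m:ℤ) - 1 ≤ (m:ℤ)*n - T^2 := by
  classical
  obtain ⟨x, hs, hq⟩ := hT
  set N : ℤ := (m:ℤ)*n - T^2 with hN
  set u : Fin m → ℤ := fun i => (m:ℤ) * x i - T with hudef
  have hm' : (0:ℤ) < m := by exact_mod_cast hm
  have hu_sum : ∑ i, u i = 0 := by
    simp only [hudef, Finset.sum_sub_distrib, ← Finset.mul_sum, hs, Finset.sum_const,
      Finset.card_univ, Fintype.card_fin, nsmul_eq_mul]
    ring
  have hu_sq : ∑ i, (u i)^2 = (m:ℤ) * N := by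
    have expand : ∀ i, (u i)^2 = (m:ℤ)^2 * (x i)^2 - (2*(m:ℤ)*T) * x i + T^2 := by
      intro i; simp only [hudef]; ring
    simp only [expand, Finset.sum_add_distrib, Finset.sum_sub_distrib, ← Finset.mul_sum,
      hs, hq, Finset.sum_const, Finset.card_univ, Fintype.card_fin, nsmul_eq_mul, hN]
    ring
  have hNnonneg : 0 ≤ N := by
    have : 0 ≤ ∑ i, (u i)^2 := Finset.sum_nonneg fun i _ => sq_nonneg _
    nlinarith
  have hNpos : 0 < N := lt_of_le_of_ne hNnonneg (Ne.symm hne)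
  have humod : ∀ i, u i % m = (-T) % m := by
    intro i
    have : u i = -T + (m:ℤ) * x i := by simp only [hudef]; ring
    rw [this, Int.add_mul_emod_self_left]
  set c : ℤ := (-T) % m with hc
  have hc0 : 0 ≤ c := Int.emod_nonneg _ (ne_of_gt hm')
  have hcm : c < m := Int.emod_lt_of_pos _ hm'
  have hudecomp : ∀ i, u i = c + (m:ℤ) * (u i / m) := by
    intro i
    have h1 := Int.emod_add_mul_ediv (u i) m
    rw [humod i] at h1
    linarith
  by_cases hczero : c = 0
  · -- all u i divisible by m
    have hex : ∃ i, u i ≠ 0 := by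
      by_contra hall
      push_neg at hall
      have : ∑ i, (u i)^2 = 0 := Finset.sum_eq_zero fun i _ => by rw [hall i]; ring
      rw [this] at hu_sq; nlinarith
    obtain ⟨i₀, hi₀⟩ := hex
    have hd := hudecomp i₀
    rw [hczero] at hd
    set t := u i₀ / m with htdef
    have htnz : t ≠ 0 := by
      intro h0; rw [h0] at hd; simp at hd; exact hi₀ hd
    have ht1 : 1 ≤ t^2 := by
      have : t ≤ -1 ∨ 1 ≤ t := by omega
      rcases this with h | h <;> nlinarith
    have hsq : (m:ℤ)^2 ≤ (u i₀)^2 := by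
      rw [hd]; ring_nf; nlinarith
    have hle : (u i₀)^2 ≤ ∑ i, (u i)^2 :=
      Finset.single_le_sum (fun i _ => sq_nonneg (u i)) (Finset.mem_univ i₀)
    nlinarith
  · have hc1 : 1 ≤ c := by omega
    have hunz : ∀ i, u i ≠ 0 := by
      intro i h0
      have := humod i
      rw [h0, Int.zero_emod] at this
      exact hczero this.symm
    have hpos_ge : ∀ i, 0 < u i → c ≤ u i := by
      intro i hpos
      have hd := hudecomp i
      rcases le_or_gt 0 (u i / m) with h | h
      · nlinarith
      · have : u i / m ≤ -1 := by omega
        nlinarith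
    have hneg_ge : ∀ i, u i < 0 → (m:ℤ) - c ≤ -u i := by
      intro i hneg
      have hd := hudecomp i
      rcases le_or_gt 0 (u i / m) with h | h
      · nlinarith
      · have : u i / m ≤ -1 := by omega
        nlinarith
    set P : ℤ := ∑ i, max (u i) 0 with hP
    set M : ℤ := ∑ i, max (-u i) 0 with hM
    have hPM : P = M := by
      have h1 : P - M = ∑ i, u i := by
        rw [hP, hM, ← Finset.sum_sub_distrib]
        exact Finset.sum_congr rfl fun i _ => max_sub_max (u i)
      rw [hu_sum] at h1
      linarith
    have hkey : c * P + ((m:ℤ) - c) * M ≤ (m:ℤ) * N := by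
      rw [← hu_sq, hP, hM, Finset.mul_sum, Finset.mul_sum, ← Finset.sum_add_distrib]
      refine Finset.sum_le_sum fun i _ => ?_
      rcases lt_trichotomy (u i) 0 with hlt' | heq | hgt
      · have h1 := hneg_ge i hlt'
        rw [max_eq_right hlt'.le, max_eq_left (by linarith : (0:ℤ) ≤ -u i)]
        nlinarith
      · exact absurd heq (hunz i)
      · have h1 := hpos_ge i hgt
        rw [max_eq_left hgt.le, max_eq_right (by linarith : -u i ≤ (0:ℤ))]
        nlinarith
    have hNP : P ≤ N := by nlinarith
    set p : ℕ := (Finset.univ.filter (fun i => 0 < u i)).card with hp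
    set q : ℕ := (Finset.univ.filter (fun i => u i < 0)).card with hq'
    have hpq : p + q = m := by
      rw [hp, hq']
      have hcompl : Finset.univ.filter (fun i => u i < 0) =
          Finset.univ.filter (fun i => ¬ 0 < u i) := by
        apply Finset.filter_congr
        intro i _
        have := hunz i
        omega
      rw [hcompl, Finset.card_filter_add_card_filter_not, Finset.card_univ,
        Fintype.card_fin]
    have hPp : c * p ≤ P := by
      have h1 : c * p = ∑ _i ∈ Finset.univ.filter (fun i => 0 < u i), c := by
        rw [Finset.sum_const, nsmul_eq_mul]; ring
      rw [h1, hP]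
      refine le_trans (Finset.sum_le_sum fun i hi => ?_)
        (Finset.sum_le_sum_of_subset_of_nonneg (Finset.filter_subset _ _)
          (fun i _ _ => le_max_right _ _))
      have hi' : 0 < u i := (Finset.mem_filter.mp hi).2
      have h2 := hpos_ge i hi'
      calc c ≤ u i := h2
        _ ≤ max (u i) 0 := le_max_left _ _
    have hMq : ((m:ℤ) - c) * q ≤ M := by
      have h1 : ((m:ℤ) - c) * q = ∑ _i ∈ Finset.univ.filter (fun i => u i < 0), ((m:ℤ) - c) := by
        rw [Finset.sum_const, nsmul_eq_mul]; ring
      rw [h1, hM]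
      refine le_trans (Finset.sum_le_sum fun i hi => ?_)
        (Finset.sum_le_sum_of_subset_of_nonneg (Finset.filter_subset _ _)
          (fun i _ _ => le_max_right _ _))
      have hi' : u i < 0 := (Finset.mem_filter.mp hi).2
      have h2 := hneg_ge i hi'
      calc (m:ℤ) - c ≤ -u i := h2
        _ ≤ max (-u i) 0 := le_max_left _ _
    have hNM : M ≤ N := by linarith
    have hq2 : (q:ℤ) = (m:ℤ) - p := by
      have : (p:ℤ) + q = m := by exact_mod_cast hpq
      linarith
    rcases le_or_gt ((m:ℤ) - c) (p:ℤ) with hcase | hcase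
    · have h1 : c * ((m:ℤ) - c) ≤ c * p := mul_le_mul_of_nonneg_left hcase hc0
      nlinarith
    · have h1 : c + 1 ≤ (q:ℤ) := by omega
      have h2 : ((m:ℤ) - c) * (c + 1) ≤ ((m:ℤ) - c) * q := by
        apply mul_le_mul_of_nonneg_left h1 (by omega)
      nlinarith

lemma sq_facts (b : ℤ) : ∃ u, b^2 = u ∧ u % 2 = b % 2 ∧ 0 ≤ u := ⟨b^2, rfl, sqpar b, sq_nonneg b⟩

/-- generic forward step: a bad value N₀ with N₀ < m-1 and m*n - N₀ = k² kills fullness -/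
lemma noSfull (m n : ℕ) (hm : 0 < m) (k N₀ : ℤ) (hN₀pos : 0 < N₀) (hN₀lt : N₀ < (m:ℤ) - 1)
    (hk : (m:ℤ)*n - N₀ = k^2) (hkpar : k % 2 = (n:ℤ) % 2) (hfull : Sfull m n) : False := by
  obtain ⟨u, hueq, hupar, hu0⟩ := sq_facts k
  rw [hueq] at hk
  have hmem : k ∈ S m n := hfull k hkpar (by rw [hueq]; omega)
  have hlow := lower m n hm k hmem (by rw [hueq]; omega)
  rw [hueq] at hlow
  omega

theorem stmt17 (n : ℕ) (hn : 0 < n) :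
    (9 < n → (Sfull 9 n ↔ ¬ ∃ k : ℤ, 9 * (n : ℤ) - 2 = k ^ 2)) ∧
    (10 < n → (Sfull 10 n ↔
      ((Odd n ∧ (¬ ∃ k : ℤ, 10 * (n : ℤ) - 1 = k ^ 2) ∧
          (¬ ∃ k : ℤ, 10 * (n : ℤ) - 5 = k ^ 2)) ∨
       (Even n ∧ ¬ ∃ k : ℤ, 10 * (n : ℤ) - 4 = k ^ 2)))) ∧
    (11 < n → (Sfull 11 n ↔
      ((¬ ∃ k : ℤ, 11 * (n : ℤ) - 2 = k ^ 2) ∧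
       (¬ ∃ k : ℤ, 11 * (n : ℤ) - 6 = k ^ 2) ∧
       (¬ ∃ k : ℤ, 11 * (n : ℤ) - 8 = k ^ 2)))) := by
  have hn' : (1:ℤ) ≤ (n:ℤ) := by exact_mod_cast hn
  refine ⟨fun _ => ⟨?_, ?_⟩, fun _ => ⟨?_, ?_⟩, fun _ => ⟨?_, ?_⟩⟩
  · -- m = 9 forward
    intro hfull ⟨k, hk⟩
    obtain ⟨u, hueq, hupar, hu0⟩ := sq_facts k
    refine noSfull 9 n (by norm_num) k 2 (by norm_num) (by norm_num)
      (by push_cast; linarith) ?_ hfull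
    rw [hueq] at hk; omega
  · -- m = 9 backward
    intro hnsq T h1 h2
    refine back9 n T h1 (by push_cast at h2 ⊢; linarith) fun hbad => hnsq ⟨T, by linarith⟩
  · -- m = 10 forward
    intro hfull
    rcases Nat.even_or_odd n with he | ho
    · refine Or.inr ⟨he, fun ⟨k, hk⟩ => ?_⟩
      obtain ⟨j, hj⟩ := he
      obtain ⟨u, hueq, hupar, hu0⟩ := sq_facts k
      refine noSfull 10 n (by norm_num) k 4 (by norm_num) (by norm_num)
        (by push_cast; linarith) ?_ hfull
      rw [hueq] at hk
      have hjz : (n:ℤ) = j + j := by exact_mod_cast hj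
      omega
    · refine Or.inl ⟨ho, fun ⟨k, hk⟩ => ?_, fun ⟨k, hk⟩ => ?_⟩ <;>
        obtain ⟨j, hj⟩ := ho <;>
        obtain ⟨u, hueq, hupar, hu0⟩ := sq_facts k <;>
        have hjz : (n:ℤ) = 2*j + 1 := by exact_mod_cast hj
      · refine noSfull 10 n (by norm_num) k 1 (by norm_num) (by norm_num)
          (by push_cast; linarith) ?_ hfull
        rw [hueq] at hk; omega
      · refine noSfull 10 n (by norm_num) k 5 (by norm_num) (by norm_num)
          (by push_cast; linarith) ?_ hfull
        rw [hueq] at hk; omega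
  · -- m = 10 backward
    rintro (⟨ho, hA, hB⟩ | ⟨he, hC⟩) T h1 h2
    · obtain ⟨j, hj⟩ := ho
      have hjz : (n:ℤ) = 2*j + 1 := by exact_mod_cast hj
      obtain ⟨u, hueq, hupar, hu0⟩ := sq_facts T
      refine back10 n T h1 (by push_cast at h2 ⊢; linarith)
        (fun hbad => hA ⟨T, by linarith⟩) ?_ (fun hbad => hB ⟨T, by linarith⟩)
      rw [hueq]; omega
    · obtain ⟨j, hj⟩ := he
      have hjz : (n:ℤ) = j + j := by exact_mod_cast hj
      refine back10 n T h1 (by push_cast at h2 ⊢; linarith)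
        ?_ (fun hbad => hC ⟨T, by linarith⟩) ?_ <;>
      · obtain ⟨u, hueq, hupar, hu0⟩ := sq_facts T
        rw [hueq]; omega
  · -- m = 11 forward
    intro hfull
    refine ⟨fun ⟨k, hk⟩ => ?_, fun ⟨k, hk⟩ => ?_, fun ⟨k, hk⟩ => ?_⟩ <;>
      obtain ⟨u, hueq, hupar, hu0⟩ := sq_facts k
    · refine noSfull 11 n (by norm_num) k 2 (by norm_num) (by norm_num)
        (by push_cast; linarith) ?_ hfull
      rw [hueq] at hk; omega
    · refine noSfull 11 n (by norm_num) k 6 (by norm_num) (by norm_num)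
        (by push_cast; linarith) ?_ hfull
      rw [hueq] at hk; omega
    · refine noSfull 11 n (by norm_num) k 8 (by norm_num) (by norm_num)
        (by push_cast; linarith) ?_ hfull
      rw [hueq] at hk; omega
  · -- m = 11 backward
    rintro ⟨hA, hB, hC⟩ T h1 h2
    exact back11 n T h1 (by push_cast at h2 ⊢; linarith)
      (fun hbad => hA ⟨T, by linarith⟩) (fun hbad => hB ⟨T, by linarith⟩)
      (fun hbad => hC ⟨T, by linarith⟩)
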